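/- Let C be a nonempty finite family of n subsets of the plane (n ≥ 1) whose union ⋃C is a bounded set. Then there exists R > 0 such that D(q,C) = 0 for every point q ∈ ℝ² with ‖q‖ > R; in particular, for every sequence of points (q_k) with ‖q_k‖ → ∞, the depths D(q_k, C) tend to 0 (curve stabbing depth vanishes at infinity). -/

import Mathlib

open Real MeasureTheory Filter

noncomputable section

abbrev Plane := EuclideanSpace ℝ (Fin 2)

/-- The ray rooted at `q` with angle `θ`. -/
def ray (q : Plane) (θ : ℝ) : Set Plane :=
  {p | ∃ t : ℝ, 0 ≤ t ∧ p = q + t • (WithLp.equiv 2 (Fin 2 → ℝ)).symm ![Real.cos θ, Real.sin θ]}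

open scoped Classical in
/-- The stabbing number: the number of members of `C` intersected by `ray q θ`. -/
def stab (C : Finset (Set Plane)) (q : Plane) (θ : ℝ) : ℕ :=
  (C.filter fun A => (ray q θ ∩ A).Nonempty).card

/-- The normalized point depth of `q` relative to `C`. -/
def pointDepth (C : Finset (Set Plane)) (q : Plane) : ℝ :=
  (1 / (C.card * π)) * ∫ θ in (0:ℝ)..π, (min (stab C q θ) (stab C q (θ + π)) : ℝ)

lemma dir_add_pi (θ : ℝ) :
    (WithLp.equiv 2 (Fin 2 → ℝ)).symm ![Real.cos (θ + π), Real.sin (θ + π)]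
      = -((WithLp.equiv 2 (Fin 2 → ℝ)).symm ![Real.cos θ, Real.sin θ] : Plane) := by
  ext i
  fin_cases i <;> simp [Real.cos_add_pi, Real.sin_add_pi]

theorem stmt3 (n : ℕ) (hn : 1 ≤ n) (C : Finset (Set Plane)) (hC : C.card = n)
    (hbdd : Bornology.IsBounded (⋃ A ∈ C, A)) :
    ∃ R : ℝ, 0 < R ∧ (∀ q : Plane, R < ‖q‖ → pointDepth C q = 0) ∧
      ∀ qs : ℕ → Plane, Tendsto (fun k => ‖qs k‖) atTop atTop →
        Tendsto (fun k => pointDepth C (qs k)) atTop (nhds 0) := by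
  classical
  obtain ⟨M, hM⟩ := isBounded_iff_forall_norm_le.mp hbdd
  have hzero : ∀ q : Plane, max M 1 < ‖q‖ → pointDepth C q = 0 := by
    intro q hq
    have hMq : M < ‖q‖ := lt_of_le_of_lt (le_max_left _ _) hq
    have key : ∀ θ, min (stab C q θ) (stab C q (θ + π)) = 0 := by
      intro θ
      by_contra h
      have h1 : stab C q θ ≠ 0 := fun e => h (by simp [e])
      have h2 : stab C q (θ + π) ≠ 0 := fun e => h (by simp [e])
      unfold stab at h1 h2
      obtain ⟨A, hA⟩ := Finset.card_ne_zero.mp h1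
      obtain ⟨B, hB⟩ := Finset.card_ne_zero.mp h2
      rw [Finset.mem_filter] at hA hB
      obtain ⟨p, hpr, hpA⟩ := hA.2
      obtain ⟨p', hpr', hpB⟩ := hB.2
      obtain ⟨t, ht, hpe⟩ := hpr
      obtain ⟨s, hs, hpe'⟩ := hpr'
      rw [dir_add_pi] at hpe'
      have hpM : ‖p‖ ≤ M := hM p (Set.mem_biUnion hA.1 hpA)
      have hp'M : ‖p'‖ ≤ M := hM p' (Set.mem_biUnion hB.1 hpB)
      rcases eq_or_lt_of_le (by positivity : (0:ℝ) ≤ t + s) with hts | hts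
      · have ht0 : t = 0 := by linarith
        have hqp : q = p := by rw [hpe, ht0, zero_smul, add_zero]
        rw [hqp] at hMq; linarith
      · set a : ℝ := s / (t + s) with ha
        set b : ℝ := t / (t + s) with hb
        have hab : a + b = 1 := by rw [ha, hb, ← add_div, add_comm s t]; exact div_self (ne_of_gt hts)
        have ha0 : 0 ≤ a := by positivity
        have hb0 : 0 ≤ b := by positivity
        have hqc : q = a • p + b • p' := by
          rw [hpe, hpe']
          have hne : t + s ≠ 0 := ne_of_gt hts
          have hne' : s + t ≠ 0 := fun e => hne (by linarith)
          match_scalars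
          · linarith [hab]
          · simp only [ha, hb]
            field_simp
            ring
        have : ‖q‖ ≤ M := by
          calc ‖q‖ = ‖a • p + b • p'‖ := by rw [hqc]
            _ ≤ ‖a • p‖ + ‖b • p'‖ := norm_add_le _ _
            _ = a * ‖p‖ + b * ‖p'‖ := by
                rw [norm_smul, norm_smul, Real.norm_eq_abs, Real.norm_eq_abs,
                  abs_of_nonneg ha0, abs_of_nonneg hb0]
            _ ≤ a * M + b * M := by
                gcongr
            _ = M := by rw [← add_mul, hab, one_mul]
        linarith
    have keyR : ∀ θ : ℝ, (min (stab C q θ) (stab C q (θ + π)) : ℝ) = 0 := by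
      intro θ
      have := key θ
      push_cast
      rw [← Nat.cast_min, this, Nat.cast_zero]
    have hint : (∫ θ in (0:ℝ)..π, (min (stab C q θ) (stab C q (θ + π)) : ℝ)) = 0 := by
      rw [intervalIntegral.integral_congr (g := fun _ => (0:ℝ)) (fun θ _ => keyR θ)]
      simp
    unfold pointDepth
    rw [hint, mul_zero]
  refine ⟨max M 1, lt_of_lt_of_le one_pos (le_max_right _ _), hzero, ?_⟩
  intro qs hqs
  have hev : ∀ᶠ k in atTop, pointDepth C (qs k) = 0 :=
    (hqs.eventually_gt_atTop (max M 1)).mono fun k hk => hzero (qs k) hk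
  exact Tendsto.congr' (hev.mono fun k h => h.symm) tendsto_const_nhds
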